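/- The generating function A^ν(t) = Σ_{n≥0} A_n^ν t^n of the numbers A_n^ν of (d,k,r)-constrained binary sequences of length n and weight ν beginning with a one satisfies, for ν ≥ 1, A^ν(t) = t^{ν-1}/(1-t)^ν · t^{1+(ν-1)d} (1-t^{r+1}) (1-t^{k-d+1})^{ν-1} as an identity of formal power series. -/

import Mathlib

/-- Weight of a binary sequence: number of ones. -/
def wt (l : List Bool) : ℕ := l.count true

/-- Length of the leading run of zeros. -/
def leadZeros (l : List Bool) : ℕ := (l.takeWhile (fun b => !b)).length

/-- Length of the trailing run of zeros. -/
def trailZeros (l : List Bool) : ℕ := (l.reverse.takeWhile (fun b => !b)).length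

/-- Every internal run of zeros (between two consecutive ones) has length in `[d, k]`. -/
def internalOK (d k : ℕ) (l : List Bool) : Prop :=
  ∀ i j : ℕ, i < j → j < l.length → l.getD i false = true → l.getD j false = true →
    (∀ m, i < m → m < j → l.getD m false = false) →
    d ≤ j - i - 1 ∧ j - i - 1 ≤ k

/-- NRZI charge accumulator: current bipolar level `z`, remaining bits. -/
def chargeAux : ℤ → List Bool → ℤ
  | _, [] => 0
  | z, b :: t => (if b then -z else z) + chargeAux (if b then -z else z) t

/-- NRZI charge (digital sum) of a binary sequence. -/
def charge (l : List Bool) : ℤ := chargeAux 1 l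

/-- Number of (d,k,r)-sequences of length n and weight ν beginning with a one
(the empty sequence is allowed, giving `A 0 0 = 1`). -/
noncomputable def Adkr (d k r n ν : ℕ) : ℕ :=
  Nat.card {l : List Bool // l.length = n ∧ (l ≠ [] → l.head? = some true) ∧
    internalOK d k l ∧ trailZeros l ≤ r ∧ wt l = ν}

/-- Number of (d,k,l,r)-sequences of length n and weight ν. -/
noncomputable def Adklr (d k L r n ν : ℕ) : ℕ :=
  Nat.card {x : List Bool // x.length = n ∧ leadZeros x ≤ L ∧
    internalOK d k x ∧ trailZeros x ≤ r ∧ wt x = ν}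

/-- Number of (d,k,r)-sequences of length n beginning with a one, with NRZI charge σ. -/
noncomputable def Cdkr (d k r n : ℕ) (σ : ℤ) : ℕ :=
  Nat.card {l : List Bool // l.length = n ∧ (l ≠ [] → l.head? = some true) ∧
    internalOK d k l ∧ trailZeros l ≤ r ∧ charge l = σ}

/-- Number of (d,k,l,r)-sequences of length n with NRZI charge σ. -/
noncomputable def Cdklr (d k L r n : ℕ) (σ : ℤ) : ℕ :=
  Nat.card {x : List Bool // x.length = n ∧ leadZeros x ≤ L ∧
    internalOK d k x ∧ trailZeros x ≤ r ∧ charge x = σ}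

/-- Binomial coefficient with integer upper argument; zero when the upper argument is negative. -/
def ibin (a : ℤ) (b : ℕ) : ℤ := if 0 ≤ a then (a.toNat.choose b : ℤ) else 0


def enc : List ℕ → List Bool
  | [] => []
  | g :: gs => true :: (List.replicate g false ++ enc gs)

def pos (gs : List ℕ) (j : ℕ) : ℕ := j + (gs.take j).sum

lemma pos_cons_succ (g : ℕ) (gs : List ℕ) (j : ℕ) :
    pos (g :: gs) (j + 1) = g + 1 + pos gs j := by
  simp [pos, List.take_succ_cons]; omega

lemma enc_getD (gs : List ℕ) (i : ℕ) :
    (enc gs).getD i false = true ↔ ∃ j < gs.length, i = pos gs j := by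
  induction gs generalizing i with
  | nil => simp [enc]
  | cons g gs ih =>
    match i with
    | 0 => simpa [enc, pos] using ⟨0, by omega, rfl⟩
    | i + 1 =>
      rw [show enc (g :: gs) = true :: (List.replicate g false ++ enc gs) from rfl]
      rw [List.getD_cons_succ]
      constructor
      · intro h
        have hig : g ≤ i := by
          by_contra hc
          push_neg at hc
          rw [List.getD_append _ _ _ _ (by simpa using hc)] at h
          rw [List.getD_eq_getElem?_getD, List.getElem?_getD_replicate_default_eq] at h
          simp at h
        rw [List.getD_append_right _ _ _ _ (by simpa using hig)] at h
        simp only [List.length_replicate] at h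
        obtain ⟨j, hj, he⟩ := (ih _).1 h
        exact ⟨j + 1, by simpa using hj, by rw [pos_cons_succ]; omega⟩
      · rintro ⟨j, hj, he⟩
        match j with
        | 0 => simp [pos] at he
        | j + 1 =>
          rw [pos_cons_succ] at he
          have hig : g ≤ i := by omega
          rw [List.getD_append_right _ _ _ _ (by simpa using hig)]
          simp only [List.length_replicate]
          exact (ih _).2 ⟨j, by simpa using hj, by omega⟩

lemma pos_succ_sub {gs : List ℕ} {j : ℕ} (h : j < gs.length) :
    pos gs (j + 1) = pos gs j + 1 + gs.getD j 0 := by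
  have : (gs.take (j+1)).sum = (gs.take j).sum + gs.getD j 0 := by
    rw [List.take_succ, List.sum_append, List.getElem?_eq_getElem h]
    simp [List.getD_eq_getElem?_getD, List.getElem?_eq_getElem h]
  simp [pos, this]; omega

lemma pos_strictMono (gs : List ℕ) : StrictMono (pos gs) := by
  apply strictMono_nat_of_lt_succ
  intro j
  have : (gs.take j).sum ≤ (gs.take (j+1)).sum :=
    ((List.take_prefix_take_left (l := gs) (by omega)).sublist.sum_le_sum (by intro x _; omega))
  simp only [pos]; omega

lemma enc_length (gs : List ℕ) : (enc gs).length = gs.length + gs.sum := by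
  induction gs with
  | nil => rfl
  | cons g gs ih => simp [enc, ih]; omega

lemma pos_lt_length {gs : List ℕ} {j : ℕ} (h : j < gs.length) :
    pos gs j < (enc gs).length := by
  have hl := enc_length gs
  have h1 : (gs.take j).sum ≤ gs.sum := by
    conv_rhs => rw [← List.take_append_drop j gs]
    rw [List.sum_append]; omega
  simp only [pos, hl]; omega

lemma internalOK_enc (d k : ℕ) (gs : List ℕ) :
    internalOK d k (enc gs) ↔ ∀ j, j + 1 < gs.length → d ≤ gs.getD j 0 ∧ gs.getD j 0 ≤ k := by
  constructor
  · intro H j hj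
    have h1 : (enc gs).getD (pos gs j) false = true :=
      (enc_getD _ _).2 ⟨j, by omega, rfl⟩
    have h2 : (enc gs).getD (pos gs (j+1)) false = true :=
      (enc_getD _ _).2 ⟨j+1, hj, rfl⟩
    have hmono := pos_strictMono gs
    have hs := pos_succ_sub (show j < gs.length by omega)
    have := H (pos gs j) (pos gs (j+1)) (hmono (by omega)) (pos_lt_length hj) h1 h2 ?_
    · omega
    · intro m hm1 hm2 
      by_contra hc
      have hb : (enc gs).getD m false = true := by
        cases h : (enc gs).getD m false
        · exact absurd h hc
        · rfl
      obtain ⟨c, hc1, hc2⟩ := (enc_getD _ _).1 hb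
      subst hc2
      have hcj : j < c := by
        by_contra hcc
        have : pos gs c ≤ pos gs j := hmono.le_iff_le.2 (by omega)
        omega
      have hcj2 : c < j + 1 := by
        by_contra hcc
        have : pos gs (j+1) ≤ pos gs c := hmono.le_iff_le.2 (by omega)
        omega
      omega
  · intro H i j hij hjl hi hj hbet
    obtain ⟨a, ha, rfl⟩ := (enc_getD _ _).1 hi
    obtain ⟨b, hb, rfl⟩ := (enc_getD _ _).1 hj
    have hmono := pos_strictMono gs
    have hab : a < b := by
      by_contra hc
      exact absurd hij (by simpa using hmono.le_iff_le.2 (by omega))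
    have hb1 : b = a + 1 := by
      by_contra hc
      have h1 : pos gs a < pos gs (a+1) := hmono (by omega)
      have h2 : pos gs (a+1) < pos gs b := hmono (by omega)
      have := hbet (pos gs (a+1)) h1 h2
      rw [(enc_getD _ _).2 ⟨a+1, by omega, rfl⟩] at this
      exact Bool.noConfusion this
    subst hb1
    have hs := pos_succ_sub (show a < gs.length by omega)
    have := H a (by omega)
    omega

lemma enc_count (gs : List ℕ) : (enc gs).count true = gs.length := by
  induction gs with
  | nil => rfl
  | cons g gs ih => simp [enc, ih, List.count_replicate]

lemma enc_append (a b : List ℕ) : enc (a ++ b) = enc a ++ enc b := by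
  induction a with
  | nil => rfl
  | cons g gs ih => simp [enc, ih]

lemma takeWhile_enc (gs : List ℕ) : (enc gs).takeWhile (fun b => !b) = [] := by
  cases gs <;> simp [enc]

lemma trailZeros_enc (f : List ℕ) (t : ℕ) : trailZeros (enc (f ++ [t])) = t := by
  rw [trailZeros, enc_append]
  have : enc [t] = true :: List.replicate t false := by simp [enc]
  rw [this]
  simp only [List.reverse_append, List.reverse_cons]
  rw [List.reverse_replicate]
  induction t with
  | zero => simp
  | succ t ih =>
    rw [List.replicate_succ]
    simpa using ih

lemma enc_injective : Function.Injective enc := by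
  intro a
  induction a with
  | nil =>
    intro b h
    cases b with
    | nil => rfl
    | cons g gs => exact absurd h (by simp [enc])
  | cons g gs ih =>
    intro b h
    cases b with
    | nil => exact absurd h (by simp [enc])
    | cons g' gs' =>
      simp only [enc, List.cons.injEq, true_and] at h
      have hg : g = g' := by
        have := congrArg (fun l => (List.takeWhile (fun b => !b) l).length) h
        simpa [List.takeWhile_append, takeWhile_enc] using this
      subst hg
      have : enc gs = enc gs' := by
        exact List.append_cancel_left h
      rw [ih this]

lemma exists_enc : ∀ n (l : List Bool), l.length ≤ n → (l = [] ∨ l.head? = some true) →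
    ∃ gs, enc gs = l := by
  intro n
  induction n with
  | zero =>
    intro l hl _
    have : l = [] := List.length_eq_zero_iff.1 (by omega)
    exact ⟨[], by simp [enc, this]⟩
  | succ n ih =>
    intro l hl hh
    rcases hh with rfl | hh
    · exact ⟨[], rfl⟩
    cases l with
    | nil => exact ⟨[], rfl⟩
    | cons b t =>
      have hb : b = true := by simpa using hh
      subst hb
      have htake : t.takeWhile (fun b => !b) =
          List.replicate (t.takeWhile (fun b => !b)).length false := by
        apply List.eq_replicate_of_mem
        intro x hx
        have := List.mem_takeWhile_imp hx
        simpa using this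
      have hre : t.dropWhile (fun b => !b) = [] ∨
          (t.dropWhile (fun b => !b)).head? = some true := by
        by_cases hn : t.dropWhile (fun b => !b) = []
        · exact Or.inl hn
        · right
          have h1 := List.head_dropWhile_not (fun b => !b) (l := t) hn
          have h2 : (t.dropWhile (fun b => !b)).head hn = true := by
            cases hx : (t.dropWhile (fun b => !b)).head hn
            · simp [hx] at h1
            · rfl
          rw [List.head?_eq_head hn, h2]
      have hlen : (t.dropWhile (fun b => !b)).length ≤ n := by
        have : (t.dropWhile (fun b => !b)).length ≤ t.length :=
          (List.dropWhile_sublist _).length_le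
        simp at hl; omega
      obtain ⟨gs', hgs'⟩ := ih _ hlen hre
      refine ⟨(t.takeWhile (fun b => !b)).length :: gs', ?_⟩
      simp only [enc, hgs']
      rw [← htake, List.takeWhile_append_dropWhile]

noncomputable def Pfin (d k r ν n : ℕ) : Finset (ℕ × (Fin (ν-1) → ℕ)) :=
  ((Finset.range (r+1)) ×ˢ (Fintype.piFinset fun _ : Fin (ν-1) => Finset.Icc d k)).filter
    (fun q => ν + q.1 + ∑ i, q.2 i = n)

open PowerSeries Finset in
lemma gf_eq (d k r ν : ℕ) (hk : d ≤ k) (hν : 1 ≤ ν) :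
    PowerSeries.mk (fun n => ((Pfin d k r ν n).card : ℚ)) =
      (X : PowerSeries ℚ) ^ (ν - 1) * ((1 - X)⁻¹) ^ ν * X ^ (1 + (ν - 1) * d) *
        (1 - X ^ (r + 1)) * (1 - X ^ (k - d + 1)) ^ (ν - 1) := by
  classical
  obtain ⟨m, rfl⟩ : ∃ m, ν = m + 1 := ⟨ν - 1, by omega⟩
  simp only [Nat.add_sub_cancel]
  have hIX : ((1 - X : PowerSeries ℚ)⁻¹) * (1 - X) = 1 := by
    apply PowerSeries.inv_mul_cancel
    simp
  have hgeom : ∀ s : ℕ, (1 - (X : PowerSeries ℚ) ^ (s+1)) =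
      (∑ i ∈ range (s+1), X ^ i) * (1 - X) := by
    intro s
    have := geom_sum_mul (X : PowerSeries ℚ) (s+1)
    linear_combination this
  have hIcc : (∑ g ∈ Icc d k, (X : PowerSeries ℚ) ^ g) =
      X ^ d * ∑ i ∈ range (k - d + 1), X ^ i := by
    rw [show Icc d k = Ico d (k+1) by rfl, Finset.sum_Ico_eq_sum_range]
    rw [Finset.mul_sum]
    rw [show k + 1 - d = k - d + 1 by omega]
    exact Finset.sum_congr rfl (fun i _ => by rw [← pow_add])
  have hpow : ((∑ g ∈ Icc d k, (X:PowerSeries ℚ) ^ g) ^ m) =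
      ∑ p ∈ Fintype.piFinset (fun _ : Fin m => Icc d k), X ^ (∑ i, p i) := by
    rw [← Fin.prod_const m, Finset.prod_univ_sum]
    exact Finset.sum_congr rfl fun p _ => (Finset.prod_pow_eq_pow_sum _ _ _)
  have key : PowerSeries.mk (fun n => ((Pfin d k r (m+1) n).card : ℚ)) =
      X ^ (m+1) * (∑ t ∈ range (r+1), X ^ t) * (∑ g ∈ Icc d k, (X:PowerSeries ℚ) ^ g) ^ m := by
    have expand : X ^ (m+1) * (∑ t ∈ range (r+1), (X:PowerSeries ℚ) ^ t) *
        (∑ g ∈ Icc d k, (X:PowerSeries ℚ) ^ g) ^ m =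
        ∑ t ∈ range (r+1), ∑ p ∈ Fintype.piFinset (fun _ : Fin m => Icc d k),
          X ^ ((m+1) + t + ∑ i, p i) := by
      have e1 : ∀ p : Fin m → ℕ,
          (X ^ (m+1) * ∑ t ∈ range (r+1), (X:PowerSeries ℚ) ^ t) * X ^ (∑ i, p i) =
          ∑ t ∈ range (r+1), X ^ ((m+1) + t + ∑ i, p i) := by
        intro p
        rw [Finset.mul_sum, Finset.sum_mul]
        refine Finset.sum_congr rfl fun t _ => ?_
        rw [← pow_add, ← pow_add]
      rw [hpow, Finset.mul_sum]
      rw [Finset.sum_congr rfl (fun p _ => e1 p)]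
      exact Finset.sum_comm
    rw [expand]
    ext n
    rw [PowerSeries.coeff_mk, map_sum]
    have : ∀ t ∈ range (r+1), (PowerSeries.coeff n)
        (∑ p ∈ Fintype.piFinset (fun _ : Fin m => Icc d k), X ^ ((m+1) + t + ∑ i, p i)) =
        ∑ p ∈ Fintype.piFinset (fun _ : Fin m => Icc d k),
          (if (m+1) + t + (∑ i, p i) = n then (1:ℚ) else 0) := by
      intro t _
      rw [map_sum]
      refine Finset.sum_congr rfl fun p _ => ?_
      rw [PowerSeries.coeff_X_pow]
      simp [eq_comm]
    rw [Finset.sum_congr rfl this]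
    rw [Pfin, Finset.card_filter]
    push_cast
    rw [Finset.sum_product]
    simp [Nat.add_sub_cancel]
  rw [key, hgeom r, hgeom (k - d), hIcc]
  have h1 : ((1 - X : PowerSeries ℚ)⁻¹)^(m+1) * ((1 - X))^(m+1) = 1 := by
    rw [← mul_pow, hIX, one_pow]
  calc X ^ (m+1) * (∑ t ∈ range (r+1), (X:PowerSeries ℚ) ^ t) *
        (X ^ d * ∑ i ∈ range (k - d + 1), X ^ i) ^ m
      = (((1 - X : PowerSeries ℚ)⁻¹)^(m+1) * ((1 - X))^(m+1)) *
        (X ^ (m+1) * (∑ t ∈ range (r+1), X ^ t) *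
          (X ^ d * ∑ i ∈ range (k - d + 1), X ^ i) ^ m) := by rw [h1, one_mul]
    _ = X ^ m * ((1 - X)⁻¹) ^ (m+1) * X ^ (1 + m * d) *
        ((∑ t ∈ range (r+1), X ^ t) * (1-X)) *
        ((∑ i ∈ range (k - d + 1), X ^ i) * (1-X)) ^ m := by
        have e2 : (X : PowerSeries ℚ)^(1+m*d) = X * (X^d)^m := by
          rw [pow_add, pow_one, mul_comm m d, pow_mul]
        have e3 : (X : PowerSeries ℚ)^(m+1) = X^m * X := by rw [pow_succ]
        rw [e2, e3, mul_pow (X^d : PowerSeries ℚ), mul_pow _ ((1:PowerSeries ℚ)-X) m]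
        ring

lemma enc_head (gs : List ℕ) (h : gs ≠ []) : (enc gs).head? = some true := by
  cases gs with
  | nil => exact absurd rfl h
  | cons g gs => rfl

lemma card_eq (d k r ν n : ℕ) (hν : 1 ≤ ν) :
    Adkr d k r n ν = (Pfin d k r ν n).card := by
  classical
  have hmem : ∀ q : ℕ × (Fin (ν-1) → ℕ), q ∈ Pfin d k r ν n ↔
      (q.1 ≤ r ∧ (∀ i, d ≤ q.2 i ∧ q.2 i ≤ k) ∧ ν + q.1 + ∑ i, q.2 i = n) := by
    intro q
    simp [Pfin, Finset.mem_filter, Finset.mem_product, Fintype.mem_piFinset,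
      Finset.mem_range, Finset.mem_Icc, Nat.lt_succ_iff]
    tauto
  set P : List Bool → Prop := fun l => l.length = n ∧ (l ≠ [] → l.head? = some true) ∧
    internalOK d k l ∧ trailZeros l ≤ r ∧ wt l = ν with hP
  -- the map
  have main : Nat.card {q : ℕ × (Fin (ν-1) → ℕ) // q ∈ Pfin d k r ν n} =
      Nat.card {l : List Bool // P l} := by
    apply Nat.card_eq_of_bijective
      (f := fun q => (⟨enc (List.ofFn q.1.2 ++ [q.1.1]), by
        obtain ⟨q, hq⟩ := q
        rw [hmem] at hq
        obtain ⟨ht, hf, hs⟩ := hq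
        have hlgs : (List.ofFn q.2 ++ [q.1]).length = ν := by
          simp; omega
        refine ⟨?_, ?_, ?_, ?_, ?_⟩
        · rw [enc_length, hlgs, List.sum_append, List.sum_ofFn]
          simpa using by omega
        · intro _
          exact enc_head _ (by simp)
        · rw [internalOK_enc]
          intro j hj
          rw [hlgs] at hj
          have hjlt : j < (List.ofFn q.2).length := by simp; omega
          rw [List.getD_append _ _ _ _ hjlt, List.getD_eq_getElem _ _ hjlt,
            List.getElem_ofFn]
          exact hf _
        · rw [trailZeros_enc]; exact ht
        · rw [wt, enc_count, hlgs]⟩ : {l : List Bool // P l}))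
    constructor
    · rintro ⟨q, hq⟩ ⟨q', hq'⟩ h
      simp only [Subtype.mk.injEq] at h
      have h2 := enc_injective h
      have h3 := List.append_inj' h2 (by simp)
      obtain ⟨h4, h5⟩ := h3
      have h6 := List.ofFn_injective h4
      have h7 : q.1 = q'.1 := by simpa using h5
      exact Subtype.ext (Prod.ext h7 h6)
    · rintro ⟨l, hl⟩
      obtain ⟨hlen, hhead, hok, htr, hwt⟩ := hl
      have hlne : l ≠ [] := by
        intro h
        rw [h] at hwt
        simp [wt] at hwt
        omega
      obtain ⟨gs, rfl⟩ := exists_enc l.length l le_rfl (Or.inr (hhead hlne))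
      have hgslen : gs.length = ν := by
        rw [wt, enc_count] at hwt; exact hwt
      have hgsne : gs ≠ [] := by
        intro h; rw [h] at hgslen; simp at hgslen; omega
      set t := gs.getLast hgsne with htdef
      set f0 := gs.dropLast with hf0
      have hsplit : f0 ++ [t] = gs := List.dropLast_append_getLast hgsne
      have hf0len : f0.length = ν - 1 := by
        rw [hf0, List.length_dropLast, hgslen]
      refine ⟨⟨(t, fun i : Fin (ν-1) => f0.getD i 0), ?_⟩, ?_⟩
      · rw [hmem]
        have hofn : List.ofFn (fun i : Fin (ν-1) => f0.getD i 0) = f0 := by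
          apply List.ext_getElem
          · simp [hf0len]
          · intro i h1 h2
            simp only [List.getElem_ofFn]
            exact List.getD_eq_getElem _ _ h2
        refine ⟨?_, ?_, ?_⟩
        · rw [← hsplit, trailZeros_enc] at htr
          exact htr
        · intro i
          have hi2 : (i : ℕ) + 1 < gs.length := by
            have := i.2; omega
          have := (internalOK_enc d k gs).1 hok i hi2
          have hilt : (i : ℕ) < f0.length := by rw [hf0len]; exact i.2
          rw [← hsplit, List.getD_append _ _ _ _ hilt] at this
          exact this
        · show ν + t + ∑ i : Fin (ν-1), f0.getD (i:ℕ) 0 = n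
          have h1 := enc_length gs
          rw [hlen] at h1
          have hsum : gs.sum = f0.sum + t := by
            rw [← hsplit]; simp
          have h2 : ∑ i : Fin (ν-1), f0.getD (i:ℕ) 0 = f0.sum := by
            conv_rhs => rw [← hofn]
            rw [List.sum_ofFn]
          rw [h2]
          omega
      · apply Subtype.ext
        simp only
        congr 1
        have hofn : List.ofFn (fun i : Fin (ν-1) => f0.getD i 0) = f0 := by
          apply List.ext_getElem
          · simp [hf0len]
          · intro i h1 h2
            simp only [List.getElem_ofFn]
            exact List.getD_eq_getElem _ _ h2
        rw [hofn, hsplit]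
  rw [Adkr]
  rw [← main]
  exact Nat.card_eq_finsetCard _

open PowerSeries in
theorem stmt9 (d k r : ℕ) (hk : d ≤ k) (ν : ℕ) (hν : 1 ≤ ν) :
    PowerSeries.mk (fun n => (Adkr d k r n ν : ℚ)) =
      (X : PowerSeries ℚ) ^ (ν - 1) * ((1 - X)⁻¹) ^ ν * X ^ (1 + (ν - 1) * d) *
        (1 - X ^ (r + 1)) * (1 - X ^ (k - d + 1)) ^ (ν - 1) := by
  have h : (fun n => ((Adkr d k r n ν : ℚ))) = fun n => (((Pfin d k r ν n).card : ℚ)) :=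
    funext fun n => by rw [card_eq d k r ν n hν]
  rw [h]
  exact gf_eq d k r ν hk hν
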